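/- Define s : ZMod 64 → H by s(t) = i^(a·b) · j^⌊a·b/2⌋ where a = t.val / 8 and b = t.val mod 8 (row-by-row enumeration of the 8×8 array S(a,b) = i^(ab) j^⌊ab/2⌋). Then s is perfect: Σ_{t ∈ ZMod 64} s(t)·(s(t+τ))* = 0 for every τ ∈ ZMod 64 with τ ≠ 0. -/

import Mathlib

noncomputable def qi : Quaternion ℝ := ⟨0,1,0,0⟩
noncomputable def qj : Quaternion ℝ := ⟨0,0,1,0⟩
noncomputable def qk : Quaternion ℝ := ⟨0,0,0,1⟩

instance : DecidableEq (Quaternion ℤ) :=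
  fun a b => decidable_of_iff _ (QuaternionAlgebra.ext_iff).symm

def zi : Quaternion ℤ := ⟨0,1,0,0⟩
def zj : Quaternion ℤ := ⟨0,0,1,0⟩

def S (t : ℕ) : Quaternion ℤ := zi ^ ((t / 8) * (t % 8)) * zj ^ ((t / 8) * (t % 8) / 2)

def φ : Quaternion ℤ →+* Quaternion ℝ where
  toFun q := ⟨(q.re : ℝ), q.imI, q.imJ, q.imK⟩
  map_one' := by ext <;> simp [Quaternion.re_one, Quaternion.imI_one, Quaternion.imJ_one, Quaternion.imK_one]
  map_mul' a b := by
    ext <;> simp [Quaternion.re_mul, Quaternion.imI_mul, Quaternion.imJ_mul,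
      Quaternion.imK_mul] <;> erw [QuaternionAlgebra.mk_mul_mk] <;> simp <;> ring
  map_zero' := by ext <;> simp [Quaternion.re_zero, Quaternion.imI_zero, Quaternion.imJ_zero, Quaternion.imK_zero]
  map_add' a b := by ext <;> simp [Quaternion.re_add, Quaternion.imI_add, Quaternion.imJ_add, Quaternion.imK_add] <;> erw [QuaternionAlgebra.mk_add_mk]

lemma φ_apply (q : Quaternion ℤ) : φ q = ⟨(q.re : ℝ), q.imI, q.imJ, q.imK⟩ := rfl

lemma φ_star (q : Quaternion ℤ) : φ (star q) = star (φ q) := by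
  rw [φ_apply, φ_apply]
  ext <;> simp [Quaternion.re_star, Quaternion.imI_star, Quaternion.imJ_star,
    Quaternion.imK_star] <;> erw [QuaternionAlgebra.star_mk] <;> simp

lemma φ_zi : φ zi = qi := by rw [φ_apply]; ext <;> simp [zi, qi]
lemma φ_zj : φ zj = qj := by rw [φ_apply]; ext <;> simp [zj, qj]

set_option maxRecDepth 40000 in
set_option maxHeartbeats 4000000 in
lemma key : ∀ τ < 64, τ ≠ 0 →
    (∑ i ∈ Finset.range 64, S i * star (S ((i + τ) % 64))) = 0 := by decide


theorem perfect_seq_length64_AOP (s : ZMod 64 → Quaternion ℝ)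
    (hs : ∀ t : ZMod 64,
      s t = qi ^ ((t.val / 8) * (t.val % 8)) * qj ^ ((t.val / 8) * (t.val % 8) / 2))
    (τ : ZMod 64) (hτ : τ ≠ 0) :
    ∑ t : ZMod 64, s t * star (s (t + τ)) = 0 := by
  have hst : ∀ t : ZMod 64, s t = φ (S t.val) := by
    intro t
    rw [hs t]
    simp only [S, map_mul, map_pow, φ_zi, φ_zj]
  have step : ∀ t : ZMod 64,
      s t * star (s (t + τ)) = φ (S t.val * star (S ((t.val + τ.val) % 64))) := by
    intro t
    rw [hst, hst, ZMod.val_add, map_mul, φ_star]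
  rw [Finset.sum_congr rfl fun t _ => step t]
  have : ∑ t : ZMod 64, φ (S t.val * star (S ((t.val + τ.val) % 64)))
      = ∑ i ∈ Finset.range 64, φ (S i * star (S ((i + τ.val) % 64))) :=
    Fin.sum_univ_eq_sum_range (fun n => φ (S n * star (S ((n + τ.val) % 64)))) 64
  rw [this, ← map_sum, key τ.val τ.val_lt (by simpa [ZMod.val_eq_zero] using hτ), map_zero]
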